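/- arXiv:2108.10632 — 4 statements merged into one kernel-verified Lean document; each statement's English description precedes it below -/
import Mathlib

section
/- Let μ > 0 and x̂₁ ≤ x̂₂ be real numbers, and set Δ = x̂₂ − x̂₁. Define g : ℝ → ℝ by g(y) = 1 − e^{−μ(x̂₁ − y)} for y ≤ x̂₁; g(y) = (1 − e^{−μ(y − x̂₁)})(1 − e^{−μ(x̂₂ − y)}) for x̂₁ < y < x̂₂; and g(y) = 1 − e^{−μ(y − x̂₂)} for y ≥ x̂₂. Then ∫_ℝ (1 − g(y)) dy = 4/μ − (2/μ + Δ) e^{−μΔ}. -/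
open MeasureTheory

open Set

lemma tail_int_aux (μ a : ℝ) (hμ : 0 < μ) :
    IntegrableOn (fun y => Real.exp (-(μ * (y - a)))) (Ioi a) volume := by
  have h := (exp_neg_integrableOn_Ioi a hμ).const_mul (Real.exp (μ * a))
  refine (integrableOn_congr_fun (fun y _ => ?_) measurableSet_Ioi).mpr h
  rw [← Real.exp_add]; ring_nf

lemma tail_val_aux (μ a : ℝ) (hμ : 0 < μ) :
    ∫ y in Ioi a, Real.exp (-(μ * (y - a))) = 1 / μ := by
  have h1 : ∀ y : ℝ, Real.exp (-(μ * (y - a))) = Real.exp (μ * a) * Real.exp (-(μ * y)) := by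
    intro y; rw [← Real.exp_add]; ring_nf
  simp_rw [h1]
  rw [integral_const_mul]
  have h2 : (∫ y in Ioi a, Real.exp (-(μ * y))) = μ⁻¹ • ∫ x in Ioi (μ * a), Real.exp (-x) :=
    integral_comp_mul_left_Ioi (fun x => Real.exp (-x)) a hμ
  rw [h2, integral_exp_neg_Ioi, smul_eq_mul,
    show Real.exp (μ * a) * (μ⁻¹ * Real.exp (-(μ * a)))
      = μ⁻¹ * (Real.exp (μ * a) * Real.exp (-(μ * a))) by ring, ← Real.exp_add]
  simp [one_div]

lemma left_int_aux (μ a : ℝ) (hμ : 0 < μ) :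
    IntegrableOn (fun y => Real.exp (-(μ * (a - y)))) (Iic a) volume := by
  have h := ((MeasurePreserving.integrableOn_comp_preimage
      (Measure.measurePreserving_neg (volume : Measure ℝ))
      (Homeomorph.neg ℝ).measurableEmbedding).2 (tail_int_aux μ (-a) hμ))
  have hpre : (Neg.neg : ℝ → ℝ) ⁻¹' (Ioi (-a)) = Iio a := by
    ext x; simp [neg_lt]
  rw [hpre] at h
  rw [integrableOn_Iic_iff_integrableOn_Iio]
  refine (integrableOn_congr_fun (fun y _ => ?_) measurableSet_Iio).mpr h
  simp only [Function.comp_apply]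
  congr 1; ring

lemma left_val_aux (μ a : ℝ) (hμ : 0 < μ) :
    ∫ y in Iic a, Real.exp (-(μ * (a - y))) = 1 / μ := by
  have h := integral_comp_neg_Iic a (fun x => Real.exp (-(μ * (x - (-a)))))
  rw [tail_val_aux μ (-a) hμ] at h
  rw [← h]
  congr 1; ext y; ring_nf


/-- Let `μ > 0` and `x̂₁ ≤ x̂₂`, `Δ = x̂₂ − x̂₁`, and let `g` be the
piecewise non-blocking probability function:
`g y = 1 − e^{−μ(x̂₁ − y)}` for `y ≤ x̂₁`;
`g y = (1 − e^{−μ(y − x̂₁)})(1 − e^{−μ(x̂₂ − y)})` for `x̂₁ < y < x̂₂`;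
`g y = 1 − e^{−μ(y − x̂₂)}` for `y ≥ x̂₂`.
Then `∫_ℝ (1 − g(y)) dy = 4/μ − (2/μ + Δ) e^{−μΔ}`. -/
theorem integral_one_sub_nonblocking_two (μ xh₁ xh₂ : ℝ) (hμ : 0 < μ) (h12 : xh₁ ≤ xh₂)
    (g : ℝ → ℝ)
    (hg1 : ∀ y, y ≤ xh₁ → g y = 1 - Real.exp (-(μ * (xh₁ - y))))
    (hg2 : ∀ y, xh₁ < y → y < xh₂ →
        g y = (1 - Real.exp (-(μ * (y - xh₁)))) * (1 - Real.exp (-(μ * (xh₂ - y)))))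
    (hg3 : ∀ y, xh₂ ≤ y → g y = 1 - Real.exp (-(μ * (y - xh₂)))) :
    ∫ y : ℝ, (1 - g y)
      = 4 / μ - (2 / μ + (xh₂ - xh₁)) * Real.exp (-(μ * (xh₂ - xh₁))) := by
  set Δ := xh₂ - xh₁ with hΔ
  set f₂ : ℝ → ℝ := fun y =>
    Real.exp (-(μ * (y - xh₁))) + Real.exp (-(μ * (xh₂ - y))) - Real.exp (-(μ * Δ)) with hf₂
  -- pointwise identities on the three pieces
  have e1 : ∀ y ∈ Iic xh₁, (1 : ℝ) - g y = Real.exp (-(μ * (xh₁ - y))) := by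
    intro y hy; rw [hg1 y hy]; ring
  have e3 : ∀ y ∈ Ioi xh₂, (1 : ℝ) - g y = Real.exp (-(μ * (y - xh₂))) := by
    intro y hy; rw [hg3 y (le_of_lt hy)]; ring
  have e2 : ∀ y ∈ Ioc xh₁ xh₂, (1 : ℝ) - g y = f₂ y := by
    rintro y ⟨hy1, hy2⟩
    rcases eq_or_lt_of_le hy2 with rfl | hy2'
    · rw [hg3 y le_rfl]
      simp [hf₂, hΔ]
    · rw [hg2 y hy1 hy2']
      have h : Real.exp (-(μ * (y - xh₁))) * Real.exp (-(μ * (xh₂ - y)))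
          = Real.exp (-(μ * Δ)) := by
        rw [← Real.exp_add]; congr 1; rw [hΔ]; ring
      simp only [hf₂]
      linear_combination -h
  -- integrability on the three pieces
  have hI1 : IntegrableOn (fun y => 1 - g y) (Iic xh₁) volume :=
    (integrableOn_congr_fun e1 measurableSet_Iic).mpr (left_int_aux μ xh₁ hμ)
  have hI3 : IntegrableOn (fun y => 1 - g y) (Ioi xh₂) volume :=
    (integrableOn_congr_fun e3 measurableSet_Ioi).mpr (tail_int_aux μ xh₂ hμ)
  have hcont : Continuous f₂ := by
    rw [hf₂]; continuity
  have hI2 : IntegrableOn (fun y => 1 - g y) (Ioc xh₁ xh₂) volume :=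
    (integrableOn_congr_fun e2 measurableSet_Ioc).mpr
      (hcont.integrableOn_Ioc)
  -- split the integral
  have hIoi : IntegrableOn (fun y => 1 - g y) (Ioi xh₁) volume := by
    rw [← Ioc_union_Ioi_eq_Ioi h12]; exact hI2.union hI3
  have hsplit1 := intervalIntegral.integral_Iic_add_Ioi (b := xh₁) (f := fun y => 1 - g y) hI1 hIoi
  have hsplit2 : (∫ y in Ioi xh₁, (1 - g y))
      = (∫ y in Ioc xh₁ xh₂, (1 - g y)) + ∫ y in Ioi xh₂, (1 - g y) := by
    rw [← Ioc_union_Ioi_eq_Ioi h12]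
    exact setIntegral_union (Ioc_disjoint_Ioi le_rfl) measurableSet_Ioi hI2 hI3
  -- values of tails
  have V1 : (∫ y in Iic xh₁, (1 - g y)) = 1 / μ := by
    rw [setIntegral_congr_fun measurableSet_Iic e1]; exact left_val_aux μ xh₁ hμ
  have V3 : (∫ y in Ioi xh₂, (1 - g y)) = 1 / μ := by
    rw [setIntegral_congr_fun measurableSet_Ioi e3]; exact tail_val_aux μ xh₂ hμ
  -- middle value via FTC
  have V2 : (∫ y in Ioc xh₁ xh₂, (1 - g y))
      = 2 / μ - 2 / μ * Real.exp (-(μ * Δ)) - Δ * Real.exp (-(μ * Δ)) := by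
    rw [setIntegral_congr_fun measurableSet_Ioc e2,
      ← intervalIntegral.integral_of_le h12]
    set F : ℝ → ℝ := fun y =>
      -Real.exp (-(μ * (y - xh₁))) / μ + Real.exp (-(μ * (xh₂ - y))) / μ
        - Real.exp (-(μ * Δ)) * y with hF
    have hderiv : ∀ y ∈ Set.uIcc xh₁ xh₂, HasDerivAt F (f₂ y) y := by
      intro y _
      have d1 : HasDerivAt (fun y : ℝ => -(μ * (y - xh₁))) (-μ) y := by
        simpa using (((hasDerivAt_id y).sub_const xh₁).const_mul μ).fun_neg
      have d2 : HasDerivAt (fun y : ℝ => -(μ * (xh₂ - y))) μ y := by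
        simpa using (((hasDerivAt_id y).const_sub xh₂).const_mul μ).fun_neg
      have D1 := (d1.exp).div_const μ
      have D2 := (d2.exp).div_const μ
      have D3 : HasDerivAt (fun y : ℝ => Real.exp (-(μ * Δ)) * y)
          (Real.exp (-(μ * Δ))) y := by
        simpa using (hasDerivAt_id y).const_mul (Real.exp (-(μ * Δ)))
      have hd := ((D1.fun_neg.fun_add D2).fun_sub D3)
      have hFeq : F = fun x => -(Real.exp (-(μ * (x - xh₁))) / μ)
          + Real.exp (-(μ * (xh₂ - x))) / μ - Real.exp (-(μ * Δ)) * x := by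
        funext x; rw [hF]; ring
      rw [hFeq]
      convert hd using 1
      case e'_4 => rfl
      case e'_5 => rfl
      rw [hf₂]
      field_simp
    rw [intervalIntegral.integral_eq_sub_of_hasDerivAt hderiv
      (hcont.intervalIntegrable xh₁ xh₂), hF]
    simp only [sub_self, mul_zero, neg_zero, Real.exp_zero]
    have : -(μ * (xh₂ - xh₁)) = -(μ * Δ) := by rw [hΔ]
    rw [this]
    field_simp
    ring
  rw [← hsplit1, hsplit2, V1, V2, V3]
  field_simp
  ring
end

section
/- Let μ > 0, n ≥ 2, and x̂₁ < x̂₂ < … < x̂ₙ be real numbers, and set Δ_k = x̂_k − x̂_{k−1} for k = 2, …, n. Define g : ℝ → ℝ by g(y) = 1 − e^{−μ(x̂₁ − y)} for y ≤ x̂₁; g(y) = (1 − e^{−μ(y − x̂_{k−1})})(1 − e^{−μ(x̂_k − y)}) for x̂_{k−1} < y < x̂_k (k = 2, …, n); and g(y) = 1 − e^{−μ(y − x̂ₙ)} for y ≥ x̂ₙ. Then ∫_ℝ (1 − g(y)) dy = 2n/μ − Σ_{k=2}^{n} (2/μ + Δ_k) e^{−μΔ_k}. -/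
open MeasureTheory Set

private lemma int_exp_mul' (c : ℝ) (hc : c ≠ 0) (a b : ℝ) :
    ∫ y in a..b, Real.exp (c * y) = (Real.exp (c * b) - Real.exp (c * a)) / c := by
  have hd : ∀ x : ℝ, HasDerivAt (fun y => Real.exp (c * y) / c) (Real.exp (c * x)) x := by
    intro x
    have h := (((hasDerivAt_id x).const_mul c).exp).div_const c
    simpa [mul_one, mul_comm, mul_div_assoc, mul_div_cancel_left₀ _ hc] using h
  rw [intervalIntegral.integral_eq_sub_of_hasDerivAt (fun x _ => hd x)
    ((Real.continuous_exp.comp (continuous_const.mul continuous_id)).intervalIntegrable a b)]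
  ring

private lemma int_exp_left (μ a : ℝ) (hμ : 0 < μ) (p q : ℝ) :
    ∫ y in p..q, Real.exp (-(μ * (y - a))) =
      (Real.exp (-(μ * (p - a))) - Real.exp (-(μ * (q - a)))) / μ := by
  have h : ∀ y : ℝ, Real.exp (-(μ * (y - a))) = Real.exp (μ * a) * Real.exp ((-μ) * y) := by
    intro y; rw [← Real.exp_add]; congr 1; ring
  simp_rw [h]
  rw [intervalIntegral.integral_const_mul, int_exp_mul' (-μ) (by linarith) p q,
    div_neg, mul_neg, ← mul_div_assoc, ← neg_div]
  congr 1
  ring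

private lemma int_exp_right (μ b : ℝ) (hμ : 0 < μ) (p q : ℝ) :
    ∫ y in p..q, Real.exp (-(μ * (b - y))) =
      (Real.exp (-(μ * (b - q))) - Real.exp (-(μ * (b - p)))) / μ := by
  have h : ∀ y : ℝ, Real.exp (-(μ * (b - y))) = Real.exp (-(μ * b)) * Real.exp (μ * y) := by
    intro y; rw [← Real.exp_add]; congr 1; ring
  simp_rw [h]
  rw [intervalIntegral.integral_const_mul, int_exp_mul' μ (by linarith) p q,
    ← mul_div_assoc]
  congr 1
  ring

private lemma integrable_exp_Ioi (μ c : ℝ) (hμ : 0 < μ) :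
    IntegrableOn (fun y => Real.exp (-(μ * (y - c)))) (Ioi c) := by
  have h0 := (exp_neg_integrableOn_Ioi c hμ).const_mul (Real.exp (μ * c))
  refine IntegrableOn.congr_fun h0 (fun y _ => ?_) measurableSet_Ioi
  rw [← Real.exp_add]; congr 1; ring

private lemma integral_exp_Ioi' (μ c : ℝ) (hμ : 0 < μ) :
    ∫ y in Ioi c, Real.exp (-(μ * (y - c))) = 1 / μ := by
  have hg := integral_comp_mul_left_Ioi (fun x => Real.exp (μ * c) * Real.exp (-x)) c hμ
  rw [integral_const_mul, integral_const_mul, integral_exp_neg_Ioi, ← Real.exp_add, add_neg_cancel,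
    Real.exp_zero] at hg
  calc ∫ y in Ioi c, Real.exp (-(μ * (y - c)))
      = ∫ y in Ioi c, Real.exp (μ * c) * Real.exp (-(μ * y)) := by
        refine setIntegral_congr_fun measurableSet_Ioi fun y _ => ?_
        rw [← Real.exp_add]; congr 1; ring
    _ = Real.exp (μ * c) * ∫ y in Ioi c, Real.exp (-(μ * y)) := integral_const_mul _ _
    _ = μ⁻¹ • (1 : ℝ) := hg
    _ = 1 / μ := by rw [smul_eq_mul, mul_one, one_div]

private lemma integral_exp_Iic' (μ c : ℝ) (hμ : 0 < μ) :
    ∫ y in Iic c, Real.exp (-(μ * (c - y))) = 1 / μ := by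
  have h := integral_comp_neg_Iic c (fun x => Real.exp (-(μ * (x - (-c)))))
  calc ∫ y in Iic c, Real.exp (-(μ * (c - y)))
      = ∫ y in Iic c, Real.exp (-(μ * ((-y) - (-c)))) := by
        refine setIntegral_congr_fun measurableSet_Iic fun y _ => ?_
        congr 1; ring
    _ = ∫ x in Ioi (-c), Real.exp (-(μ * (x - (-c)))) := h
    _ = 1 / μ := integral_exp_Ioi' μ (-c) hμ

private lemma integrable_exp_Iic (μ c : ℝ) (hμ : 0 < μ) :
    IntegrableOn (fun y => Real.exp (-(μ * (c - y)))) (Iic c) := by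
  have h1 : IntegrableOn (fun x => Real.exp (-(μ * (x - (-c))))) (Ioi (-c)) :=
    integrable_exp_Ioi μ (-c) hμ
  have h2 : Integrable ((Ioi (-c)).indicator fun x => Real.exp (-(μ * (x - (-c))))) :=
    (integrable_indicator_iff measurableSet_Ioi).2 h1
  have h3 := h2.comp_neg
  have h4 : (fun y => ((Ioi (-c)).indicator fun x => Real.exp (-(μ * (x - (-c))))) (-y))
      = (Iio c).indicator (fun y => Real.exp (-(μ * (c - y)))) := by
    funext y
    by_cases hy : y < c
    · rw [Set.indicator_of_mem (by simp [mem_Ioi]; linarith) ,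
        Set.indicator_of_mem (mem_Iio.2 hy)]
      congr 1; ring
    · rw [Set.indicator_of_notMem (by simp [mem_Ioi]; linarith),
        Set.indicator_of_notMem (by simpa using hy)]
  rw [h4] at h3
  have h5 : IntegrableOn (fun y => Real.exp (-(μ * (c - y)))) (Iio c) :=
    (integrable_indicator_iff measurableSet_Iio).1 h3
  have h6 : IntegrableOn (fun y => Real.exp (-(μ * (c - y)))) {c} := by
    rw [IntegrableOn, Measure.restrict_singleton, Real.volume_singleton, zero_smul]
    exact integrable_zero_measure
  have := h5.union h6
  rwa [Set.Iio_union_right] at this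


/-- Let `μ > 0`, `n ≥ 2`, `x̂ 0 < x̂ 1 < … < x̂ (n−1)`, and
`Δ_k = x̂ k − x̂ (k−1)`. Let `g` be the piecewise non-blocking probability function:
`g y = 1 − e^{−μ(x̂ 0 − y)}` for `y ≤ x̂ 0`;
`g y = (1 − e^{−μ(y − x̂ (k−1))})(1 − e^{−μ(x̂ k − y)})` for `x̂ (k−1) < y < x̂ k`;
`g y = 1 − e^{−μ(y − x̂ (n−1))}` for `y ≥ x̂ (n−1)`.
Then `∫_ℝ (1 − g(y)) dy = 2n/μ − Σ_{k=1}^{n−1} (2/μ + Δ_k) e^{−μΔ_k}`. -/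
theorem integral_one_sub_nonblocking_n (μ : ℝ) (hμ : 0 < μ)
    (n : ℕ) (hn : 2 ≤ n) (xh : ℕ → ℝ)
    (hmono : ∀ i j, i < j → j < n → xh i < xh j)
    (g : ℝ → ℝ)
    (hg1 : ∀ y, y ≤ xh 0 → g y = 1 - Real.exp (-(μ * (xh 0 - y))))
    (hg2 : ∀ k, 1 ≤ k → k < n → ∀ y, xh (k - 1) < y → y < xh k →
        g y = (1 - Real.exp (-(μ * (y - xh (k - 1)))))
              * (1 - Real.exp (-(μ * (xh k - y)))))
    (hg3 : ∀ y, xh (n - 1) ≤ y → g y = 1 - Real.exp (-(μ * (y - xh (n - 1))))) :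
    ∫ y : ℝ, (1 - g y)
      = 2 * n / μ
        - ∑ k ∈ Finset.Ico 1 n,
            (2 / μ + (xh k - xh (k - 1))) * Real.exp (-(μ * (xh k - xh (k - 1)))) := by
  have hμ' : μ ≠ 0 := ne_of_gt hμ
  have hab : xh 0 < xh (n - 1) := hmono 0 (n - 1) (by omega) (by omega)
  set f : ℝ → ℝ := fun y => 1 - g y with hf
  -- left piece
  have hLeq : EqOn f (fun y => Real.exp (-(μ * (xh 0 - y)))) (Iic (xh 0)) := by
    intro y hy; simp only [hf]; rw [hg1 y hy]; ring
  have hIL : IntegrableOn f (Iic (xh 0)) :=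
    IntegrableOn.congr_fun (integrable_exp_Iic μ (xh 0) hμ) (fun y hy => (hLeq hy).symm)
      measurableSet_Iic
  have hVL : ∫ y in Iic (xh 0), f y = 1 / μ := by
    rw [setIntegral_congr_fun measurableSet_Iic hLeq]
    exact integral_exp_Iic' μ (xh 0) hμ
  -- right piece
  have hReq : EqOn f (fun y => Real.exp (-(μ * (y - xh (n - 1))))) (Ioi (xh (n - 1))) := by
    intro y hy; simp only [hf]; rw [hg3 y (le_of_lt hy)]; ring
  have hIR : IntegrableOn f (Ioi (xh (n - 1))) :=
    IntegrableOn.congr_fun (integrable_exp_Ioi μ (xh (n - 1)) hμ) (fun y hy => (hReq hy).symm)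
      measurableSet_Ioi
  have hVR : ∫ y in Ioi (xh (n - 1)), f y = 1 / μ := by
    rw [setIntegral_congr_fun measurableSet_Ioi hReq]
    exact integral_exp_Ioi' μ (xh (n - 1)) hμ
  -- middle pieces
  have hstep : ∀ k, k < n - 1 → xh k < xh (k + 1) := fun k hk =>
    hmono k (k + 1) (by omega) (by omega)
  have hMeq : ∀ k, k < n - 1 → EqOn f
      (fun y => Real.exp (-(μ * (y - xh k))) + Real.exp (-(μ * (xh (k + 1) - y)))
        - Real.exp (-(μ * (xh (k + 1) - xh k)))) (Ioo (xh k) (xh (k + 1))) := by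
    intro k hk y hy
    have h2 := hg2 (k + 1) (by omega) (by omega) y (by simpa using hy.1) hy.2
    simp only [Nat.add_sub_cancel] at h2
    have huv : Real.exp (-(μ * (y - xh k))) * Real.exp (-(μ * (xh (k + 1) - y)))
        = Real.exp (-(μ * (xh (k + 1) - xh k))) := by
      rw [← Real.exp_add]; congr 1; ring
    simp only [hf]
    rw [h2, ← huv]; ring
  have hcont : ∀ k : ℕ, Continuous (fun y => Real.exp (-(μ * (y - xh k)))
      + Real.exp (-(μ * (xh (k + 1) - y))) - Real.exp (-(μ * (xh (k + 1) - xh k)))) := by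
    intro k; fun_prop
  have hIM : ∀ k, k < n - 1 → IntegrableOn f (Ioc (xh k) (xh (k + 1))) := by
    intro k hk
    rw [integrableOn_Ioc_iff_integrableOn_Ioo]
    exact IntegrableOn.congr_fun
      (((hcont k).integrableOn_Icc).mono_set Set.Ioo_subset_Icc_self)
      (fun y hy => (hMeq k hk hy).symm) measurableSet_Ioo
  have hVM : ∀ k, k < n - 1 → ∫ y in xh k..xh (k + 1), f y
      = 2 / μ - (2 / μ + (xh (k + 1) - xh k)) * Real.exp (-(μ * (xh (k + 1) - xh k))) := by
    intro k hk
    rw [intervalIntegral.integral_of_le (hstep k hk).le, integral_Ioc_eq_integral_Ioo,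
      setIntegral_congr_fun measurableSet_Ioo (hMeq k hk),
      ← integral_Ioc_eq_integral_Ioo, ← intervalIntegral.integral_of_le (hstep k hk).le]
    have c1 : Continuous fun y => Real.exp (-(μ * (y - xh k))) := by fun_prop
    have c2 : Continuous fun y => Real.exp (-(μ * (xh (k + 1) - y))) := by fun_prop
    rw [intervalIntegral.integral_sub (f := fun y => Real.exp (-(μ * (y - xh k))) + Real.exp (-(μ * (xh (k + 1) - y)))) (((c1.add c2)).intervalIntegrable _ _)
        ((continuous_const).intervalIntegrable _ _),
      intervalIntegral.integral_add (c1.intervalIntegrable _ _) (c2.intervalIntegrable _ _),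
      int_exp_left μ (xh k) hμ, int_exp_right μ (xh (k + 1)) hμ,
      intervalIntegral.integral_const, sub_self, mul_zero, neg_zero, Real.exp_zero,
      smul_eq_mul]
    field_simp
    simp only [sub_self, mul_zero, neg_zero, Real.exp_zero]; ring
  -- interval integrability and adjacent sum
  have hII : ∀ k, k < n - 1 → IntervalIntegrable f volume (xh k) (xh (k + 1)) := by
    intro k hk
    rw [intervalIntegrable_iff_integrableOn_Ioc_of_le (hstep k hk).le]
    exact hIM k hk
  have hsum := intervalIntegral.sum_integral_adjacent_intervals (a := xh) (μ := volume)
    (n := n - 1) (fun k hk => hII k hk)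
  -- integrability on Ioc (xh 0) (xh m)
  have hIocAll : ∀ m, m ≤ n - 1 → IntegrableOn f (Ioc (xh 0) (xh m)) := by
    intro m
    induction m with
    | zero => intro _; simp [Set.Ioc_self]
    | succ m ih =>
      intro hm
      have h0m : xh 0 ≤ xh m := by
        rcases Nat.eq_zero_or_pos m with h | h
        · rw [h]
        · exact (hmono 0 m h (by omega)).le
      have hmm : xh m ≤ xh (m + 1) := (hstep m (by omega)).le
      rw [← Set.Ioc_union_Ioc_eq_Ioc h0m hmm]
      exact (ih (by omega)).union (hIM m (by omega))
  have hIoc : IntegrableOn f (Ioc (xh 0) (xh (n - 1))) := hIocAll (n - 1) le_rfl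
  -- splitting the whole line
  have hIoiA : IntegrableOn f (Ioi (xh 0)) := by
    rw [← Set.Ioc_union_Ioi_eq_Ioi hab.le]
    exact hIoc.union hIR
  have hsplit2 : ∫ y in Ioi (xh 0), f y
      = (∫ y in Ioc (xh 0) (xh (n - 1)), f y) + ∫ y in Ioi (xh (n - 1)), f y := by
    rw [← setIntegral_union Set.Ioc_disjoint_Ioi_same measurableSet_Ioi hIoc hIR,
      Set.Ioc_union_Ioi_eq_Ioi hab.le]
  have htotal : ∫ y, f y = (∫ y in Iic (xh 0), f y) + ∫ y in Ioi (xh 0), f y :=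
    (intervalIntegral.integral_Iic_add_Ioi hIL hIoiA).symm
  -- evaluate middle total
  have hmid : ∫ y in Ioc (xh 0) (xh (n - 1)), f y
      = ∑ k ∈ Finset.range (n - 1),
          (2 / μ - (2 / μ + (xh (k + 1) - xh k)) * Real.exp (-(μ * (xh (k + 1) - xh k)))) := by
    rw [← intervalIntegral.integral_of_le hab.le, ← hsum]
    exact Finset.sum_congr rfl fun k hk => hVM k (Finset.mem_range.mp hk)
  have hsplitsum : ∑ k ∈ Finset.range (n - 1),
        (2 / μ - (2 / μ + (xh (k + 1) - xh k)) * Real.exp (-(μ * (xh (k + 1) - xh k))))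
      = (n - 1 : ℕ) * (2 / μ) - ∑ k ∈ Finset.range (n - 1),
          (2 / μ + (xh (k + 1) - xh k)) * Real.exp (-(μ * (xh (k + 1) - xh k))) := by
    rw [Finset.sum_sub_distrib, Finset.sum_const, nsmul_eq_mul, Finset.card_range]
  have hreindex : ∑ k ∈ Finset.Ico 1 n,
        (2 / μ + (xh k - xh (k - 1))) * Real.exp (-(μ * (xh k - xh (k - 1))))
      = ∑ k ∈ Finset.range (n - 1),
          (2 / μ + (xh (k + 1) - xh k)) * Real.exp (-(μ * (xh (k + 1) - xh k))) := by
    rw [Finset.sum_Ico_eq_sum_range]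
    exact Finset.sum_congr rfl fun k _ => by norm_num [add_comm 1 k]
  have hcast : ((n - 1 : ℕ) : ℝ) = (n : ℝ) - 1 := by
    have : (1 : ℕ) ≤ n := by omega
    push_cast [Nat.cast_sub this]
    ring
  rw [htotal, hsplit2, hVL, hVR, hmid, hsplitsum, hreindex, hcast]
  ring
end

section
/- Consider the window obstacle model on [−L/2, L/2] with intensity λ > 0 and rate μ > 0: on a probability space, N is a Poisson random variable with mean λL; (Y_j)_{j≥1} are i.i.d. uniform on [−L/2, L/2]; (V_j)_{j≥1} and (W_j)_{j≥1} are i.i.d. exponential with rate μ; and N, (Y_j), (V_j), (W_j) are mutually independent. Obstacle j is the segment [Y_j − V_j, Y_j + W_j]. Then for any real x̂, the probability that no obstacle j ≤ N covers x̂ equals exp(−λ ∫_{−L/2}^{L/2} e^{−μ|x̂ − y|} dy). -/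
open MeasureTheory ProbabilityTheory

open Set Real
open scoped NNReal ENNReal
set_option linter.unusedSectionVars false

/-- Codomain family for the joint family consisting of the Poisson count `N`
(index `none`) and the real random variables `Y j`, `V j`, `W j` (indices `some (j, 0)`,
`some (j, 1)`, `some (j, 2)`). -/
def WindowObstacleFam : Option (ℕ × Fin 3) → Type
  | none => ℕ
  | some _ => ℝ

instance : ∀ i, MeasurableSpace (WindowObstacleFam i)
  | none => inferInstanceAs (MeasurableSpace ℕ)
  | some _ => inferInstanceAs (MeasurableSpace ℝ)

/-- The joint family `{N, Y 0, V 0, W 0, Y 1, V 1, W 1, …}`. -/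
def windowObstacleFun {Ω : Type*} (N : Ω → ℕ) (Y V W : ℕ → Ω → ℝ) :
    ∀ i : Option (ℕ × Fin 3), Ω → WindowObstacleFam i
  | none => N
  | some (j, k) => ![Y j, V j, W j] k


lemma expMeasure_Ici {r : ℝ} (hr : 0 < r) (t : ℝ) :
    expMeasure r (Set.Ici t) = ENNReal.ofReal (Real.exp (-(r * max t 0))) := by
  haveI : IsProbabilityMeasure (expMeasure r) := isProbabilityMeasure_expMeasure hr
  have hsing : expMeasure r {t} = 0 := by
    rw [expMeasure, gammaMeasure]
    exact (withDensity_absolutelyContinuous _ _) (measure_singleton t)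
  have hIic : expMeasure r (Set.Iic t) = ENNReal.ofReal (cdf (expMeasure r) t) :=
    (ofReal_cdf _ t).symm
  have hIio : expMeasure r (Set.Iio t) = ENNReal.ofReal (cdf (expMeasure r) t) := by
    have h2 : Set.Iic t = Set.Iio t ∪ {t} := by
      ext x; simp [le_iff_lt_or_eq]
    have h4 : expMeasure r (Set.Iic t) = expMeasure r (Set.Iio t) := by
      rw [h2]; exact measure_congr (MeasureTheory.union_ae_eq_left_of_ae_eq_empty (ae_eq_empty.mpr hsing))
    rw [← h4, hIic]
  have h3 : Set.Ici t = (Set.Iio t)ᶜ := by ext x; simp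
  rw [h3, measure_compl measurableSet_Iio (measure_ne_top _ _), measure_univ, hIio,
    cdf_expMeasure_eq hr]
  rcases le_or_gt 0 t with h | h
  · rw [if_pos h, max_eq_left h]
    have he : Real.exp (-(r * t)) ≤ 1 := exp_le_one_iff.mpr (by nlinarith)
    rw [← ENNReal.ofReal_one, ← ENNReal.ofReal_sub _ (by linarith)]
    ring_nf
  · rw [if_neg (not_le.mpr h), max_eq_right h.le]
    simp

lemma poisson_singleton (r : ℝ≥0) (n : ℕ) :
    poissonMeasure r {n} = ENNReal.ofReal (poissonPMFReal r n) := by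
  rw [poissonMeasure_singleton]
  rfl


section
variable {Ω : Type*} [MeasurableSpace Ω] (P : Measure Ω) [IsProbabilityMeasure P]
    (N : Ω → ℕ) (Y V W : ℕ → Ω → ℝ)
    (hNmeas : Measurable N) (hYmeas : ∀ j, Measurable (Y j))
    (hVmeas : ∀ j, Measurable (V j)) (hWmeas : ∀ j, Measurable (W j))
    (xh : ℝ)

-- measurability of the family
example : ∀ i, Measurable (windowObstacleFun N Y V W i) := by
  rintro (_ | ⟨j, k⟩)
  · exact hNmeas
  · fin_cases k
    · exact hYmeas j
    · exact hVmeas j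
    · exact hWmeas j

-- comap measurability helper
example (T : Finset (Option (ℕ × Fin 3))) (j : ℕ)
    (h0 : some (j, 0) ∈ T) (h1 : some (j, 1) ∈ T) (h2 : some (j, 2) ∈ T) :
    MeasurableSet[MeasurableSpace.comap
        (fun a (i : T) => windowObstacleFun N Y V W i a) MeasurableSpace.pi]
      {ω | ¬ (Y j ω - V j ω ≤ xh ∧ xh ≤ Y j ω + W j ω)} := by
  let e0 : (∀ i : T, WindowObstacleFam i) → ℝ := fun v => v ⟨some (j, 0), h0⟩
  let e1 : (∀ i : T, WindowObstacleFam i) → ℝ := fun v => v ⟨some (j, 1), h1⟩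
  let e2 : (∀ i : T, WindowObstacleFam i) → ℝ := fun v => v ⟨some (j, 2), h2⟩
  have m0 : Measurable e0 := measurable_pi_apply _
  have m1 : Measurable e1 := measurable_pi_apply _
  have m2 : Measurable e2 := measurable_pi_apply _
  refine ⟨{v | ¬ (e0 v - e1 v ≤ xh ∧ xh ≤ e0 v + e2 v)}, ?_, ?_⟩
  · exact ((measurableSet_le (m0.sub m1) measurable_const).inter
      (measurableSet_le measurable_const (m0.add m2))).compl
  · rfl
end

section
variable {Ω : Type*} [MeasurableSpace Ω] (P : Measure Ω) [IsProbabilityMeasure P]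
    {N : Ω → ℕ} {Y V W : ℕ → Ω → ℝ}
    (hNmeas : Measurable N) (hYmeas : ∀ j, Measurable (Y j))
    (hVmeas : ∀ j, Measurable (V j)) (hWmeas : ∀ j, Measurable (W j))
    (hindep : iIndepFun (windowObstacleFun N Y V W) P)
    (xh : ℝ)

include hNmeas hYmeas hVmeas hWmeas in
lemma hf_meas : ∀ i, Measurable (windowObstacleFun N Y V W i) := by
  rintro (_ | ⟨j, k⟩)
  · exact hNmeas
  · fin_cases k
    · exact hYmeas j
    · exact hVmeas j
    · exact hWmeas j

lemma comap_helper (T : Finset (Option (ℕ × Fin 3))) (j : ℕ)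
    (h0 : some (j, 0) ∈ T) (h1 : some (j, 1) ∈ T) (h2 : some (j, 2) ∈ T) :
    MeasurableSet[MeasurableSpace.comap
        (fun a (i : T) => windowObstacleFun N Y V W i a) MeasurableSpace.pi]
      {ω | ¬ (Y j ω - V j ω ≤ xh ∧ xh ≤ Y j ω + W j ω)} := by
  let e0 : (∀ i : T, WindowObstacleFam i) → ℝ := fun v => v ⟨some (j, 0), h0⟩
  let e1 : (∀ i : T, WindowObstacleFam i) → ℝ := fun v => v ⟨some (j, 1), h1⟩
  let e2 : (∀ i : T, WindowObstacleFam i) → ℝ := fun v => v ⟨some (j, 2), h2⟩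
  have m0 : Measurable e0 := measurable_pi_apply _
  have m1 : Measurable e1 := measurable_pi_apply _
  have m2 : Measurable e2 := measurable_pi_apply _
  refine ⟨{v | ¬ (e0 v - e1 v ≤ xh ∧ xh ≤ e0 v + e2 v)}, ?_, ?_⟩
  · exact ((measurableSet_le (m0.sub m1) measurable_const).inter
      (measurableSet_le measurable_const (m0.add m2))).compl
  · rfl

include hNmeas hYmeas hVmeas hWmeas hindep in
lemma prod_A (n : ℕ) :
    P (⋂ j ∈ Finset.range n, {ω | ¬ (Y j ω - V j ω ≤ xh ∧ xh ≤ Y j ω + W j ω)})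
      = ∏ j ∈ Finset.range n, P {ω | ¬ (Y j ω - V j ω ≤ xh ∧ xh ≤ Y j ω + W j ω)} := by
  induction n with
  | zero => simp
  | succ n ih =>
    rw [Finset.range_add_one, Finset.set_biInter_insert, Finset.prod_insert (by simp)]
    set S : Finset (Option (ℕ × Fin 3)) := {some (n, 0), some (n, 1), some (n, 2)} with hS
    set T : Finset (Option (ℕ × Fin 3)) := ((Finset.range n) ×ˢ Finset.univ).image some with hT
    have hST : Disjoint S T := by
      rw [Finset.disjoint_left]
      rintro a ha hb
      simp only [hS, hT, Finset.mem_insert, Finset.mem_singleton, Finset.mem_image,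
        Finset.mem_product, Finset.mem_range] at ha hb
      obtain ⟨⟨j, k⟩, ⟨hj, -⟩, rfl⟩ := hb
      rcases ha with h | h | h <;> · injection h with h'; injection h' with h1 h2; omega
    have ind := (hindep.indepFun_finset S T hST (hf_meas hNmeas hYmeas hVmeas hWmeas))
    have hsT : MeasurableSet[MeasurableSpace.comap
        (fun a (i : T) => windowObstacleFun N Y V W i a) MeasurableSpace.pi]
        (⋂ j ∈ Finset.range n, {ω | ¬ (Y j ω - V j ω ≤ xh ∧ xh ≤ Y j ω + W j ω)}) :=
      Finset.measurableSet_biInter _ (fun j hj => comap_helper xh T j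
        (by simp [hT, Finset.mem_range.mp hj]) (by simp [hT, Finset.mem_range.mp hj])
        (by simp [hT, Finset.mem_range.mp hj]))
    rw [ind.meas_inter (comap_helper xh S n (by simp [hS]) (by simp [hS]) (by simp [hS])) hsT, ih]

include hNmeas hYmeas hVmeas hWmeas hindep in
lemma fac_N (n : ℕ) :
    P ({ω | N ω = n} ∩ ⋂ j ∈ Finset.range n, {ω | ¬ (Y j ω - V j ω ≤ xh ∧ xh ≤ Y j ω + W j ω)})
      = P {ω | N ω = n}
        * ∏ j ∈ Finset.range n, P {ω | ¬ (Y j ω - V j ω ≤ xh ∧ xh ≤ Y j ω + W j ω)} := by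
  set S : Finset (Option (ℕ × Fin 3)) := {none} with hS
  set T : Finset (Option (ℕ × Fin 3)) := ((Finset.range n) ×ˢ Finset.univ).image some with hT
  have hST : Disjoint S T := by
    rw [Finset.disjoint_left]
    rintro a ha hb
    simp only [hS, Finset.mem_singleton] at ha
    subst ha
    simp [hT] at hb
  have ind := (hindep.indepFun_finset S T hST (hf_meas hNmeas hYmeas hVmeas hWmeas))
  have hsS : MeasurableSet[MeasurableSpace.comap
      (fun a (i : S) => windowObstacleFun N Y V W i a) MeasurableSpace.pi] {ω | N ω = n} := by
    let e : (∀ i : S, WindowObstacleFam i) → ℕ := fun v => v ⟨none, by simp [hS]⟩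
    have me : Measurable e := measurable_pi_apply _
    exact ⟨{v | e v = n}, me (measurableSet_singleton n), rfl⟩
  have hsT : MeasurableSet[MeasurableSpace.comap
      (fun a (i : T) => windowObstacleFun N Y V W i a) MeasurableSpace.pi]
      (⋂ j ∈ Finset.range n, {ω | ¬ (Y j ω - V j ω ≤ xh ∧ xh ≤ Y j ω + W j ω)}) :=
    Finset.measurableSet_biInter _ (fun j hj => comap_helper xh T j
      (by simp [hT, Finset.mem_range.mp hj]) (by simp [hT, Finset.mem_range.mp hj])
      (by simp [hT, Finset.mem_range.mp hj]))
  rw [ind.meas_inter hsS hsT, prod_A P hNmeas hYmeas hVmeas hWmeas hindep xh n]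
end

section marginal
variable {Ω : Type*} [MeasurableSpace Ω] (P : Measure Ω) [IsProbabilityMeasure P]
    {lam μ L : ℝ} {N : Ω → ℕ} {Y V W : ℕ → Ω → ℝ}

theorem cover_prob (hμ : 0 < μ) (hL : 0 < L)
    (hNmeas : Measurable N) (hYmeas : ∀ j, Measurable (Y j))
    (hVmeas : ∀ j, Measurable (V j)) (hWmeas : ∀ j, Measurable (W j))
    (hY : ∀ j, Measure.map (Y j) P
        = (ENNReal.ofReal L)⁻¹ • (volume.restrict (Set.Icc (-(L / 2)) (L / 2))))
    (hV : ∀ j, Measure.map (V j) P = expMeasure μ)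
    (hW : ∀ j, Measure.map (W j) P = expMeasure μ)
    (hindep : iIndepFun (windowObstacleFun N Y V W) P)
    (xh : ℝ) (j : ℕ) :
    P {ω | Y j ω - V j ω ≤ xh ∧ xh ≤ Y j ω + W j ω}
      = (ENNReal.ofReal L)⁻¹
        * ∫⁻ y in Set.Icc (-(L / 2)) (L / 2), ENNReal.ofReal (Real.exp (-(μ * |xh - y|))) := by
  haveI : IsProbabilityMeasure (expMeasure μ) := isProbabilityMeasure_expMeasure hμ
  have hf := hf_meas hNmeas hYmeas hVmeas hWmeas
  have hVW : IndepFun (V j) (W j) P := hindep.indepFun (i := some (j, 1)) (j := some (j, 2))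
    (by simp)
  have hYVW : IndepFun (Y j) (fun ω => (V j ω, W j ω)) P :=
    (hindep.indepFun_prodMk hf (some (j, 1)) (some (j, 2)) (some (j, 0))
      (by simp) (by simp)).symm
  have hmapVW : Measure.map (fun ω => (V j ω, W j ω)) P = (expMeasure μ).prod (expMeasure μ) := by
    rw [(indepFun_iff_map_prod_eq_prod_map_map (hVmeas j).aemeasurable
      (hWmeas j).aemeasurable).mp hVW, hV j, hW j]
  have hmap : Measure.map (fun ω => (Y j ω, (V j ω, W j ω))) P
      = ((ENNReal.ofReal L)⁻¹ • (volume.restrict (Set.Icc (-(L / 2)) (L / 2)))).prod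
          ((expMeasure μ).prod (expMeasure μ)) := by
    rw [(indepFun_iff_map_prod_eq_prod_map_map (hYmeas j).aemeasurable
      ((hVmeas j).prodMk (hWmeas j)).aemeasurable).mp hYVW, hY j, hmapVW]
  have hSmeas : MeasurableSet {p : ℝ × ℝ × ℝ | p.1 - p.2.1 ≤ xh ∧ xh ≤ p.1 + p.2.2} := by
    exact (measurableSet_le (measurable_fst.sub (measurable_fst.comp measurable_snd))
      measurable_const).inter (measurableSet_le measurable_const
      (measurable_fst.add (measurable_snd.comp measurable_snd)))
  have h1 : P {ω | Y j ω - V j ω ≤ xh ∧ xh ≤ Y j ω + W j ω}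
      = Measure.map (fun ω => (Y j ω, (V j ω, W j ω))) P
          {p : ℝ × ℝ × ℝ | p.1 - p.2.1 ≤ xh ∧ xh ≤ p.1 + p.2.2} := by
    rw [Measure.map_apply ((hYmeas j).prodMk ((hVmeas j).prodMk (hWmeas j))) hSmeas]
    rfl
  rw [h1, hmap, Measure.prod_apply hSmeas]
  have hslice : ∀ y : ℝ, (Prod.mk y ⁻¹' {p : ℝ × ℝ × ℝ | p.1 - p.2.1 ≤ xh ∧ xh ≤ p.1 + p.2.2})
      = Set.Ici (y - xh) ×ˢ Set.Ici (xh - y) := by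
    intro y
    ext ⟨v, w⟩
    simp only [Set.mem_preimage, Set.mem_setOf_eq, Set.mem_prod, Set.mem_Ici]
    constructor <;> · rintro ⟨h1, h2⟩; constructor <;> linarith
  have hval : ∀ y : ℝ, (expMeasure μ).prod (expMeasure μ)
      (Prod.mk y ⁻¹' {p : ℝ × ℝ × ℝ | p.1 - p.2.1 ≤ xh ∧ xh ≤ p.1 + p.2.2})
      = ENNReal.ofReal (Real.exp (-(μ * |xh - y|))) := by
    intro y
    rw [hslice y, Measure.prod_prod, expMeasure_Ici hμ, expMeasure_Ici hμ,
      ← ENNReal.ofReal_mul (by positivity), ← Real.exp_add]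
    congr 2
    have : max (y - xh) 0 + max (xh - y) 0 = |xh - y| := by
      rcases le_total xh y with h | h
      · rw [abs_of_nonpos (by linarith), max_eq_left (by linarith), max_eq_right (by linarith)]
        ring
      · rw [abs_of_nonneg (by linarith), max_eq_right (by linarith), max_eq_left (by linarith)]
        ring
    rw [← this]; ring
  simp_rw [hval]
  rw [lintegral_smul_measure, smul_eq_mul]
end marginal

/-- Window obstacle model on `[−L/2, L/2]` with intensity `λ` and rate `μ`:
`N` Poisson with mean `λL`, `(Y j)` i.i.d. uniform on `[−L/2, L/2]`, `(V j)`, `(W j)` i.i.d.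
exponential with rate `μ`, all mutually independent; obstacle `j` is `[Y j − V j, Y j + W j]`.
For any `x̂`, the probability that no obstacle `j < N` covers `x̂` equals
`exp(−λ ∫_{−L/2}^{L/2} e^{−μ|x̂ − y|} dy)`. -/
theorem window_LOS_prob_one_point
    {Ω : Type*} [MeasurableSpace Ω] (P : Measure Ω) [IsProbabilityMeasure P]
    (lam μ L : ℝ) (hlam : 0 < lam) (hμ : 0 < μ) (hL : 0 < L)
    (N : Ω → ℕ) (Y V W : ℕ → Ω → ℝ)
    (hNmeas : Measurable N) (hYmeas : ∀ j, Measurable (Y j))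
    (hVmeas : ∀ j, Measurable (V j)) (hWmeas : ∀ j, Measurable (W j))
    (hN : Measure.map N P = poissonMeasure (lam * L).toNNReal)
    (hY : ∀ j, Measure.map (Y j) P
        = (ENNReal.ofReal L)⁻¹ • (volume.restrict (Set.Icc (-(L / 2)) (L / 2))))
    (hV : ∀ j, Measure.map (V j) P = expMeasure μ)
    (hW : ∀ j, Measure.map (W j) P = expMeasure μ)
    (hindep : iIndepFun (windowObstacleFun N Y V W) P)
    (xh : ℝ) :
    P {ω | ∀ j < N ω, ¬ (Y j ω - V j ω ≤ xh ∧ xh ≤ Y j ω + W j ω)}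
      = ENNReal.ofReal
          (Real.exp (-(lam * ∫ y in -(L / 2)..(L / 2), Real.exp (-(μ * |xh - y|))))) := by
  have hab : -(L / 2) ≤ L / 2 := by linarith
  set g : ℝ → ℝ := fun y => Real.exp (-(μ * |xh - y|)) with hg
  have hcont : Continuous g := by fun_prop
  set Ireal : ℝ := ∫ y in -(L / 2)..(L / 2), g y with hIdef
  have hInonneg : 0 ≤ Ireal :=
    intervalIntegral.integral_nonneg hab (fun y _ => Real.exp_nonneg _)
  have hIleL : Ireal ≤ L := by
    have h1 : Ireal ≤ ∫ _ in -(L / 2)..(L / 2), (1 : ℝ) := by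
      refine intervalIntegral.integral_mono_on hab (hcont.intervalIntegrable _ _)
        intervalIntegrable_const (fun y _ => Real.exp_le_one_iff.mpr ?_)
      have := abs_nonneg (xh - y); nlinarith
    rw [intervalIntegral.integral_const, smul_eq_mul, mul_one] at h1
    linarith
  have hlint : ∫⁻ y in Set.Icc (-(L / 2)) (L / 2), ENNReal.ofReal (g y)
      = ENNReal.ofReal Ireal := by
    rw [← MeasureTheory.ofReal_integral_eq_lintegral_ofReal
        (hcont.integrableOn_Icc) (Filter.Eventually.of_forall (fun y => Real.exp_nonneg _))]
    congr 1
    rw [hIdef, intervalIntegral.integral_of_le hab, MeasureTheory.integral_Icc_eq_integral_Ioc]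
  -- probability that obstacle j does not cover xh
  have hc0 : 0 ≤ 1 - Ireal / L := by
    have : Ireal / L ≤ 1 := (div_le_one hL).mpr hIleL
    linarith
  have hcovermeas : ∀ j : ℕ, MeasurableSet {ω | Y j ω - V j ω ≤ xh ∧ xh ≤ Y j ω + W j ω} :=
    fun j => (measurableSet_le ((hYmeas j).sub (hVmeas j)) measurable_const).inter
      (measurableSet_le measurable_const ((hYmeas j).add (hWmeas j)))
  have pA : ∀ j : ℕ, P {ω | ¬ (Y j ω - V j ω ≤ xh ∧ xh ≤ Y j ω + W j ω)}
      = ENNReal.ofReal (1 - Ireal / L) := by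
    intro j
    have hcompl : {ω | ¬ (Y j ω - V j ω ≤ xh ∧ xh ≤ Y j ω + W j ω)}
        = {ω | Y j ω - V j ω ≤ xh ∧ xh ≤ Y j ω + W j ω}ᶜ := rfl
    rw [hcompl, measure_compl (hcovermeas j) (measure_ne_top _ _), measure_univ,
      cover_prob P hμ hL hNmeas hYmeas hVmeas hWmeas hY hV hW hindep xh j, hlint]
    have hdiv : (ENNReal.ofReal L)⁻¹ * ENNReal.ofReal Ireal = ENNReal.ofReal (Ireal / L) := by
      rw [ENNReal.ofReal_div_of_pos hL, ENNReal.div_eq_inv_mul]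
    rw [hdiv, ← ENNReal.ofReal_one, ← ENNReal.ofReal_sub _ (by positivity)]
  have hNn : ∀ n : ℕ, P {ω | N ω = n}
      = ENNReal.ofReal (poissonPMFReal (lam * L).toNNReal n) := by
    intro n
    have h1 : {ω | N ω = n} = N ⁻¹' {n} := rfl
    rw [h1, ← Measure.map_apply hNmeas (measurableSet_singleton n), hN, poisson_singleton]
  -- decomposition of the event
  have hdecomp : {ω | ∀ j < N ω, ¬ (Y j ω - V j ω ≤ xh ∧ xh ≤ Y j ω + W j ω)}
      = ⋃ n, ({ω | N ω = n}
          ∩ ⋂ j ∈ Finset.range n, {ω | ¬ (Y j ω - V j ω ≤ xh ∧ xh ≤ Y j ω + W j ω)}) := by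
    ext ω
    simp only [Set.mem_setOf_eq, Set.mem_iUnion, Set.mem_inter_iff, Set.mem_iInter,
      Finset.mem_range]
    constructor
    · intro h; exact ⟨N ω, rfl, fun j hj => h j hj⟩
    · rintro ⟨n, rfl, h⟩; exact h
  have hmeasn : ∀ n : ℕ, MeasurableSet ({ω | N ω = n}
      ∩ ⋂ j ∈ Finset.range n, {ω | ¬ (Y j ω - V j ω ≤ xh ∧ xh ≤ Y j ω + W j ω)}) :=
    fun n => (hNmeas (measurableSet_singleton n)).inter
      (Finset.measurableSet_biInter _ (fun j _ => (hcovermeas j).compl))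
  have hdisj : Pairwise (Function.onFun Disjoint (fun n => {ω | N ω = n}
      ∩ ⋂ j ∈ Finset.range n, {ω | ¬ (Y j ω - V j ω ≤ xh ∧ xh ≤ Y j ω + W j ω)})) := by
    intro m n hmn
    refine Set.disjoint_left.mpr ?_
    rintro ω ⟨h1, -⟩ ⟨h2, -⟩
    exact hmn (h1.symm.trans h2)
  rw [hdecomp, measure_iUnion hdisj hmeasn]
  set r : ℝ := lam * L with hr
  have hr0 : 0 ≤ r := by positivity
  have hterm : ∀ n : ℕ, P ({ω | N ω = n}
      ∩ ⋂ j ∈ Finset.range n, {ω | ¬ (Y j ω - V j ω ≤ xh ∧ xh ≤ Y j ω + W j ω)})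
      = ENNReal.ofReal (Real.exp (-r) * (r * (1 - Ireal / L)) ^ n / n.factorial) := by
    intro n
    rw [fac_N P hNmeas hYmeas hVmeas hWmeas hindep xh n, hNn n,
      Finset.prod_congr rfl (fun j _ => pA j), Finset.prod_const, Finset.card_range,
      ← ENNReal.ofReal_pow hc0, ← ENNReal.ofReal_mul poissonPMFReal_nonneg]
    congr 1
    rw [poissonPMFReal, Real.coe_toNNReal _ hr0, mul_pow r (1 - Ireal / L) n]
    ring
  simp_rw [hterm]
  have hsummable : Summable (fun n : ℕ =>
      Real.exp (-r) * ((r * (1 - Ireal / L)) ^ n / n.factorial)) :=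
    (Real.summable_pow_div_factorial _).mul_left _
  have hnn : ∀ n : ℕ, 0 ≤ Real.exp (-r) * ((r * (1 - Ireal / L)) ^ n / n.factorial) := by
    intro n; positivity
  calc ∑' n : ℕ, ENNReal.ofReal (Real.exp (-r) * (r * (1 - Ireal / L)) ^ n / n.factorial)
      = ∑' n : ℕ, ENNReal.ofReal
          (Real.exp (-r) * ((r * (1 - Ireal / L)) ^ n / n.factorial)) := by
        apply tsum_congr; intro n; congr 1; ring
    _ = ENNReal.ofReal (∑' n : ℕ,
          Real.exp (-r) * ((r * (1 - Ireal / L)) ^ n / n.factorial)) :=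
        (ENNReal.ofReal_tsum_of_nonneg hnn hsummable).symm
    _ = ENNReal.ofReal (Real.exp (-r) * Real.exp (r * (1 - Ireal / L))) := by
        rw [tsum_mul_left]
        congr 2
        rw [Real.exp_eq_exp_ℝ, NormedSpace.exp_eq_tsum_div]
    _ = ENNReal.ofReal (Real.exp (-(lam * Ireal))) := by
        rw [← Real.exp_add]
        congr 1
        rw [hr]; field_simp; ring
end

section
/- Consider the window obstacle model on [−L/2, L/2] with intensity λ > 0 and rate μ > 0: N is a Poisson random variable with mean λL; (Y_j)_{j≥1} are i.i.d. uniform on [−L/2, L/2]; (V_j)_{j≥1} and (W_j)_{j≥1} are i.i.d. exponential with rate μ; and N, (Y_j), (V_j), (W_j) are mutually independent; obstacle j is the segment [Y_j − V_j, Y_j + W_j]. Let x̂₁ < x̂₂ be real numbers and define g : ℝ → ℝ by g(y) = 1 − e^{−μ(x̂₁ − y)} for y ≤ x̂₁; g(y) = (1 − e^{−μ(y − x̂₁)})(1 − e^{−μ(x̂₂ − y)}) for x̂₁ < y < x̂₂; and g(y) = 1 − e^{−μ(y − x̂₂)} for y ≥ x̂₂. Then the probability that no obstacle j ≤ N covers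 x̂₁ and no obstacle j ≤ N covers x̂₂ equals exp(−λ ∫_{−L/2}^{L/2} (1 − g(y)) dy). -/
open MeasureTheory ProbabilityTheory

lemma expMeasure_Iic {r : ℝ} (hr : 0 < r) (x : ℝ) :
    expMeasure r (Set.Iic x) = ENNReal.ofReal (if 0 ≤ x then 1 - Real.exp (-(r*x)) else 0) := by
  rw [expMeasure, gammaMeasure, withDensity_apply _ measurableSet_Iic]
  exact lintegral_exponentialPDF_eq_antiDeriv hr x

lemma expMeasure_Iio {r : ℝ} (hr : 0 < r) (x : ℝ) :
    expMeasure r (Set.Iio x) = ENNReal.ofReal (if 0 ≤ x then 1 - Real.exp (-(r*x)) else 0) := by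
  rw [← expMeasure_Iic hr x]
  refine le_antisymm (measure_mono Set.Iio_subset_Iic_self) ?_
  have h0 : expMeasure r {x} = 0 := by
    rw [expMeasure, gammaMeasure, withDensity_apply _ (measurableSet_singleton x),
      Measure.restrict_singleton, Real.volume_singleton]
    simp
  calc expMeasure r (Set.Iic x) ≤ expMeasure r (Set.Iio x ∪ {x}) := by
        refine measure_mono fun y (hy : y ≤ x) => ?_
        rcases lt_or_eq_of_le hy with h | h
        · exact Or.inl h
        · exact Or.inr h
    _ ≤ expMeasure r (Set.Iio x) + expMeasure r {x} := measure_union_le _ _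
    _ = expMeasure r (Set.Iio x) := by rw [h0, add_zero]

lemma expMeasure_Iio_of_nonpos {r : ℝ} (hr : 0 < r) {x : ℝ} (hx : x ≤ 0) :
    expMeasure r (Set.Iio x) = 0 := by
  rw [expMeasure_Iio hr]
  rcases eq_or_lt_of_le hx with h | h
  · simp [h]
  · rw [if_neg (not_le.2 h)]; simp

lemma expMeasure_Iio_of_nonneg {r : ℝ} (hr : 0 < r) {x : ℝ} (hx : 0 ≤ x) :
    expMeasure r (Set.Iio x) = ENNReal.ofReal (1 - Real.exp (-(r*x))) := by
  rw [expMeasure_Iio hr, if_pos hx]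

lemma measure_eq_of_between {α : Type*} {m : MeasurableSpace α} (μ : Measure α)
    {S T Nn : Set α} (h1 : T ⊆ S) (h2 : S ⊆ T ∪ Nn) (h3 : μ Nn = 0) : μ S = μ T := by
  refine le_antisymm ?_ (measure_mono h1)
  calc μ S ≤ μ (T ∪ Nn) := measure_mono h2
    _ ≤ μ T + μ Nn := measure_union_le _ _
    _ = μ T := by rw [h3, add_zero]

lemma section_measure {μm x1 x2 : ℝ} (hμ : 0 < μm) (h12 : x1 < x2) (g : ℝ → ℝ)
    (hg1 : ∀ y, y ≤ x1 → g y = 1 - Real.exp (-(μm * (x1 - y))))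
    (hg2 : ∀ y, x1 < y → y < x2 →
      g y = (1 - Real.exp (-(μm * (y - x1)))) * (1 - Real.exp (-(μm * (x2 - y)))))
    (hg3 : ∀ y, x2 ≤ y → g y = 1 - Real.exp (-(μm * (y - x2)))) (y : ℝ) :
    (expMeasure μm).prod (expMeasure μm)
      {p : ℝ × ℝ | ¬ (y - p.1 ≤ x1 ∧ x1 ≤ y + p.2) ∧ ¬ (y - p.1 ≤ x2 ∧ x2 ≤ y + p.2)}
      = ENNReal.ofReal (g y) := by
  haveI := isProbabilityMeasure_expMeasure hμ
  set π := (expMeasure μm).prod (expMeasure μm) with hπ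
  have hnullv : ∀ c, c ≤ 0 → π {p : ℝ × ℝ | p.1 < c} = 0 := by
    intro c hc
    have h : {p : ℝ × ℝ | p.1 < c} = Set.Iio c ×ˢ (Set.univ : Set ℝ) := by
      ext p; simp [Set.mem_prod]
    rw [hπ, h, Measure.prod_prod, expMeasure_Iio_of_nonpos hμ hc, zero_mul]
  have hnullw : ∀ c, c ≤ 0 → π {p : ℝ × ℝ | p.2 < c} = 0 := by
    intro c hc
    have h : {p : ℝ × ℝ | p.2 < c} = (Set.univ : Set ℝ) ×ˢ Set.Iio c := by
      ext p; simp [Set.mem_prod]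
    rw [hπ, h, Measure.prod_prod, expMeasure_Iio_of_nonpos hμ hc, mul_zero]
  have hset : {p : ℝ × ℝ | ¬ (y - p.1 ≤ x1 ∧ x1 ≤ y + p.2) ∧ ¬ (y - p.1 ≤ x2 ∧ x2 ≤ y + p.2)}
      = {p : ℝ × ℝ | (p.1 < y - x1 ∨ p.2 < x1 - y) ∧ (p.1 < y - x2 ∨ p.2 < x2 - y)} := by
    ext p
    simp only [Set.mem_setOf_eq, not_and_or, not_le]
    constructor <;>
      exact fun ⟨h1, h2⟩ => ⟨h1.imp (fun h => by linarith) (fun h => by linarith),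
        h2.imp (fun h => by linarith) (fun h => by linarith)⟩
  rw [hset]
  rcases le_or_gt y x1 with hy1 | hy1
  · -- case y ≤ x1
    have key : π {p : ℝ × ℝ | (p.1 < y - x1 ∨ p.2 < x1 - y) ∧ (p.1 < y - x2 ∨ p.2 < x2 - y)}
        = π {p : ℝ × ℝ | p.2 < x1 - y} := by
      refine measure_eq_of_between π ?_ ?_
        (measure_union_null (hnullv (y - x1) (by linarith)) (hnullv (y - x2) (by linarith)))
      · intro p hp
        exact ⟨Or.inr hp, Or.inr (by simp only [Set.mem_setOf_eq] at hp ⊢; linarith)⟩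
      · rintro p ⟨h1, _⟩
        rcases h1 with h | h
        · exact Or.inr (Or.inl h)
        · exact Or.inl h
    rw [key]
    have h : {p : ℝ × ℝ | p.2 < x1 - y} = (Set.univ : Set ℝ) ×ˢ Set.Iio (x1 - y) := by
      ext p; simp [Set.mem_prod]
    rw [hπ, h, Measure.prod_prod, measure_univ, one_mul,
      expMeasure_Iio_of_nonneg hμ (by linarith), hg1 y hy1]
  rcases lt_or_ge y x2 with hy2 | hy2
  · -- case x1 < y < x2
    have key : π {p : ℝ × ℝ | (p.1 < y - x1 ∨ p.2 < x1 - y) ∧ (p.1 < y - x2 ∨ p.2 < x2 - y)}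
        = π {p : ℝ × ℝ | p.1 < y - x1 ∧ p.2 < x2 - y} := by
      refine measure_eq_of_between π ?_ ?_
        (measure_union_null (hnullw (x1 - y) (by linarith)) (hnullv (y - x2) (by linarith)))
      · rintro p ⟨h1, h2⟩
        exact ⟨Or.inl h1, Or.inr h2⟩
      · rintro p ⟨h1, h2⟩
        rcases h1 with h1 | h1
        · rcases h2 with h2 | h2
          · exact Or.inr (Or.inr h2)
          · exact Or.inl ⟨h1, h2⟩
        · exact Or.inr (Or.inl h1)
    rw [key]
    have h : {p : ℝ × ℝ | p.1 < y - x1 ∧ p.2 < x2 - y} = Set.Iio (y - x1) ×ˢ Set.Iio (x2 - y) := by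
      ext p; simp [Set.mem_prod]
    rw [hπ, h, Measure.prod_prod, expMeasure_Iio_of_nonneg hμ (by linarith : (0:ℝ) ≤ y - x1),
      expMeasure_Iio_of_nonneg hμ (by linarith : (0:ℝ) ≤ x2 - y), hg2 y hy1 hy2,
      ← ENNReal.ofReal_mul (by
        have : Real.exp (-(μm * (y - x1))) ≤ 1 := Real.exp_le_one_iff.mpr (by nlinarith)
        linarith)]
  · -- case x2 ≤ y
    have key : π {p : ℝ × ℝ | (p.1 < y - x1 ∨ p.2 < x1 - y) ∧ (p.1 < y - x2 ∨ p.2 < x2 - y)}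
        = π {p : ℝ × ℝ | p.1 < y - x2} := by
      refine measure_eq_of_between π ?_ ?_
        (measure_union_null (hnullw (x1 - y) (by linarith)) (hnullw (x2 - y) (by linarith)))
      · intro p hp
        exact ⟨Or.inl (by simp only [Set.mem_setOf_eq] at hp ⊢; linarith), Or.inl hp⟩
      · rintro p ⟨h1, h2⟩
        rcases h2 with h | h
        · exact Or.inl h
        · exact Or.inr (Or.inr h)
    rw [key]
    have h : {p : ℝ × ℝ | p.1 < y - x2} = Set.Iio (y - x2) ×ˢ (Set.univ : Set ℝ) := by
      ext p; simp [Set.mem_prod]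
    rw [hπ, h, Measure.prod_prod, measure_univ, mul_one,
      expMeasure_Iio_of_nonneg hμ (by linarith), hg3 y hy2]

/-- The set of `(y, v, w)` such that the obstacle `[y - v, y + w]` covers neither `x1` nor `x2`. -/
def covSet (x1 x2 : ℝ) : Set (ℝ × ℝ × ℝ) :=
  {q | ¬ (q.1 - q.2.1 ≤ x1 ∧ x1 ≤ q.1 + q.2.2) ∧ ¬ (q.1 - q.2.1 ≤ x2 ∧ x2 ≤ q.1 + q.2.2)}

lemma covSet_meas (x1 x2 : ℝ) : MeasurableSet (covSet x1 x2) := by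
  have key : ∀ x : ℝ, MeasurableSet {q : ℝ × ℝ × ℝ | q.1 - q.2.1 ≤ x ∧ x ≤ q.1 + q.2.2} := by
    intro x
    rw [Set.setOf_and]
    exact (measurableSet_le (measurable_fst.sub (measurable_fst.comp measurable_snd))
        measurable_const).inter
      (measurableSet_le measurable_const (measurable_fst.add (measurable_snd.comp measurable_snd)))
  have : covSet x1 x2 = {q : ℝ × ℝ × ℝ | q.1 - q.2.1 ≤ x1 ∧ x1 ≤ q.1 + q.2.2}ᶜ ∩
      {q : ℝ × ℝ × ℝ | q.1 - q.2.1 ≤ x2 ∧ x2 ≤ q.1 + q.2.2}ᶜ := by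
    ext q; simp [covSet]
  rw [this]
  exact ((key x1).compl).inter ((key x2).compl)

lemma windowObstacle_meas {Ω : Type*} [MeasurableSpace Ω] (N : Ω → ℕ) (Y V W : ℕ → Ω → ℝ)
    (hNmeas : Measurable N) (hYmeas : ∀ j, Measurable (Y j))
    (hVmeas : ∀ j, Measurable (V j)) (hWmeas : ∀ j, Measurable (W j)) :
    ∀ i, Measurable (windowObstacleFun N Y V W i) := by
  rintro (_ | ⟨j, k⟩)
  · exact hNmeas
  · fin_cases k
    · exact hYmeas j
    · exact hVmeas j
    · exact hWmeas j
lemma window_factorization {Ω : Type*} [MeasurableSpace Ω] (P : Measure Ω)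
    (N : Ω → ℕ) (Y V W : ℕ → Ω → ℝ)
    (hNmeas : Measurable N) (hYmeas : ∀ j, Measurable (Y j))
    (hVmeas : ∀ j, Measurable (V j)) (hWmeas : ∀ j, Measurable (W j))
    (hindep : iIndepFun (windowObstacleFun N Y V W) P)
    (x1 x2 : ℝ) (m : ℕ) :
    ∀ n, P ((N ⁻¹' {m}) ∩ ⋂ j ∈ Finset.range n,
        (fun ω => (Y j ω, V j ω, W j ω)) ⁻¹' covSet x1 x2)
      = P (N ⁻¹' {m}) * ∏ j ∈ Finset.range n,
          P ((fun ω => (Y j ω, V j ω, W j ω)) ⁻¹' covSet x1 x2) := by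
  classical
  have hfmeas := windowObstacle_meas N Y V W hNmeas hYmeas hVmeas hWmeas
  set f := windowObstacleFun N Y V W with hf
  set A : ℕ → Set Ω := fun j => (fun ω => (Y j ω, V j ω, W j ω)) ⁻¹' covSet x1 x2 with hA
  intro n
  induction n with
  | zero => simp
  | succ n ih =>
    set S : Finset (Option (ℕ × Fin 3)) := {some (n,0), some (n,1), some (n,2)} with hS
    set T : Finset (Option (ℕ × Fin 3)) :=
      insert none ((Finset.range n ×ˢ (Finset.univ : Finset (Fin 3))).image some) with hT
    have hST : Disjoint S T := by
      rw [Finset.disjoint_left]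
      intro a ha hb
      simp only [hS, Finset.mem_insert, Finset.mem_singleton] at ha
      simp only [hT, Finset.mem_insert, Finset.mem_image, Finset.mem_product,
        Finset.mem_range] at hb
      rcases hb with hb | ⟨⟨j, k⟩, ⟨hj, -⟩, hjk⟩
      · rcases ha with rfl | rfl | rfl <;> exact nomatch hb
      · rcases ha with rfl | rfl | rfl <;>
        · have h1 : j = n := congrArg (fun o => (Option.getD o (n, 0)).1) hjk
          omega
    have hS0 : some (n, (0 : Fin 3)) ∈ S := by simp [hS]
    have hS1 : some (n, (1 : Fin 3)) ∈ S := by simp [hS]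
    have hS2 : some (n, (2 : Fin 3)) ∈ S := by simp [hS]
    have hTn : (none : Option (ℕ × Fin 3)) ∈ T := Finset.mem_insert_self _ _
    have hTm : ∀ j, j < n → ∀ k : Fin 3, some (j, k) ∈ T := fun j hj k =>
      Finset.mem_insert_of_mem (Finset.mem_image_of_mem _
        (Finset.mem_product.2 ⟨Finset.mem_range.2 hj, Finset.mem_univ _⟩))
    have hIF := hindep.indepFun_finset S T hST hfmeas
    set sSet : Set (∀ i : S, WindowObstacleFam i) :=
      (fun v : ∀ i : S, WindowObstacleFam i =>
        ((v ⟨some (n,0), hS0⟩ : ℝ), (v ⟨some (n,1), hS1⟩ : ℝ), (v ⟨some (n,2), hS2⟩ : ℝ)))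
        ⁻¹' covSet x1 x2 with hsSet
    set tSet : Set (∀ i : T, WindowObstacleFam i) :=
      ((fun v : ∀ i : T, WindowObstacleFam i => (v ⟨none, hTn⟩ : ℕ)) ⁻¹' {m}) ∩
      ⋂ j, ⋂ (hj : j < n),
        (fun v : ∀ i : T, WindowObstacleFam i =>
          ((v ⟨some (j,0), hTm j hj 0⟩ : ℝ), (v ⟨some (j,1), hTm j hj 1⟩ : ℝ),
            (v ⟨some (j,2), hTm j hj 2⟩ : ℝ))) ⁻¹' covSet x1 x2 with htSet
    have msS : MeasurableSet sSet :=
      (covSet_meas x1 x2).preimage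
        ((measurable_pi_apply _).prodMk
          ((measurable_pi_apply _).prodMk (measurable_pi_apply _)))
    have msT : MeasurableSet tSet := by
      refine MeasurableSet.inter ((measurableSet_singleton m).preimage (measurable_pi_apply _)) ?_
      refine MeasurableSet.iInter fun j => MeasurableSet.iInter fun hj => ?_
      exact (covSet_meas x1 x2).preimage
        ((measurable_pi_apply _).prodMk
          ((measurable_pi_apply _).prodMk (measurable_pi_apply _)))
    have hpreS : (fun ω (i : S) => f i ω) ⁻¹' sSet = A n := rfl
    have hpreT : (fun ω (i : T) => f i ω) ⁻¹' tSet
        = (N ⁻¹' {m}) ∩ ⋂ j ∈ Finset.range n, A j := by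
      ext ω
      simp only [htSet, Set.mem_preimage, Set.mem_inter_iff, Set.mem_iInter,
        Set.mem_singleton_iff, Finset.mem_range]
      exact Iff.rfl
    have step := hIF.measure_inter_preimage_eq_mul sSet tSet msS msT
    rw [hpreS, hpreT] at step
    have hsets : (N ⁻¹' {m}) ∩ ⋂ j ∈ Finset.range (n+1), A j
        = A n ∩ ((N ⁻¹' {m}) ∩ ⋂ j ∈ Finset.range n, A j) := by
      rw [Finset.range_add_one, Finset.set_biInter_insert]
      ext ω; simp only [Set.mem_inter_iff]; tauto
    rw [hsets, step, ih, Finset.prod_range_succ]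
    ring

lemma obstacle_prob {Ω : Type*} [MeasurableSpace Ω] (P : Measure Ω) [IsProbabilityMeasure P]
    {μm L x1 x2 : ℝ} (hμ : 0 < μm) (hL : 0 < L) (h12 : x1 < x2)
    (Yf Vf Wf : Ω → ℝ) (hYm : Measurable Yf) (hVm : Measurable Vf) (hWm : Measurable Wf)
    (hY : Measure.map Yf P
        = (ENNReal.ofReal L)⁻¹ • (volume.restrict (Set.Icc (-(L / 2)) (L / 2))))
    (hV : Measure.map Vf P = expMeasure μm) (hW : Measure.map Wf P = expMeasure μm)
    (hVW : IndepFun Vf Wf P) (hYVW : IndepFun Yf (fun ω => (Vf ω, Wf ω)) P)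
    (g : ℝ → ℝ)
    (hg1 : ∀ y, y ≤ x1 → g y = 1 - Real.exp (-(μm * (x1 - y))))
    (hg2 : ∀ y, x1 < y → y < x2 →
      g y = (1 - Real.exp (-(μm * (y - x1)))) * (1 - Real.exp (-(μm * (x2 - y)))))
    (hg3 : ∀ y, x2 ≤ y → g y = 1 - Real.exp (-(μm * (y - x2)))) :
    P ((fun ω => (Yf ω, Vf ω, Wf ω)) ⁻¹' covSet x1 x2)
      = (ENNReal.ofReal L)⁻¹
        * ∫⁻ y in Set.Icc (-(L / 2)) (L / 2), ENNReal.ofReal (g y) := by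
  haveI := isProbabilityMeasure_expMeasure hμ
  have hmap2 : Measure.map (fun ω => (Vf ω, Wf ω)) P = (expMeasure μm).prod (expMeasure μm) := by
    rw [(indepFun_iff_map_prod_eq_prod_map_map hVm.aemeasurable hWm.aemeasurable).mp hVW, hV, hW]
  have hmap3 : Measure.map (fun ω => (Yf ω, Vf ω, Wf ω)) P
      = ((ENNReal.ofReal L)⁻¹ • (volume.restrict (Set.Icc (-(L / 2)) (L / 2)))).prod
          ((expMeasure μm).prod (expMeasure μm)) := by
    rw [← hY, ← hmap2]
    exact (indepFun_iff_map_prod_eq_prod_map_map hYm.aemeasurable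
      (hVm.aemeasurable.prodMk hWm.aemeasurable)).mp hYVW
  rw [← Measure.map_apply (hYm.prodMk (hVm.prodMk hWm)) (covSet_meas x1 x2), hmap3,
    Measure.prod_apply (covSet_meas x1 x2)]
  have hsec : ∀ y : ℝ, (expMeasure μm).prod (expMeasure μm) (Prod.mk y ⁻¹' covSet x1 x2)
      = ENNReal.ofReal (g y) := fun y => section_measure hμ h12 g hg1 hg2 hg3 y
  simp_rw [hsec]
  rw [lintegral_smul_measure, smul_eq_mul]

open Nat in
lemma real_exp_tsum (x : ℝ) : (∑' n : ℕ, x ^ n / n !) = Real.exp x := by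
  rw [Real.exp_eq_exp_ℝ, NormedSpace.exp_eq_tsum_div]

open Nat in
lemma poisson_generating (c q : ℝ) (hc : 0 ≤ c) (hq : 0 ≤ q) :
    (∑' n : ℕ, ENNReal.ofReal (Real.exp (-c) * c ^ n / n !) * (ENNReal.ofReal q) ^ n)
      = ENNReal.ofReal (Real.exp (-c + c * q)) := by
  have hterm : ∀ n : ℕ, ENNReal.ofReal (Real.exp (-c) * c ^ n / n !) * (ENNReal.ofReal q) ^ n
      = ENNReal.ofReal (Real.exp (-c) * ((c * q) ^ n / n !)) := by
    intro n
    rw [← ENNReal.ofReal_pow hq, ← ENNReal.ofReal_mul (by positivity)]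
    congr 1
    rw [mul_pow]
    ring
  simp_rw [hterm]
  rw [← ENNReal.ofReal_tsum_of_nonneg (fun n => by positivity)
      ((Real.summable_pow_div_factorial (c * q)).mul_left _),
    tsum_mul_left, real_exp_tsum, ← Real.exp_add]

open Nat in
/-- Window obstacle model on `[−L/2, L/2]` with intensity `λ` and rate `μ`.
Let `x̂₁ < x̂₂` and let `g` be the piecewise two-point non-blocking probability function.
Then the probability that no obstacle `j < N` covers `x̂₁` and no obstacle `j < N` covers `x̂₂`
equals `exp(−λ ∫_{−L/2}^{L/2} (1 − g(y)) dy)`. -/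
theorem window_LOS_prob_two_points
    {Ω : Type*} [MeasurableSpace Ω] (P : Measure Ω) [IsProbabilityMeasure P]
    (lam μ L : ℝ) (hlam : 0 < lam) (hμ : 0 < μ) (hL : 0 < L)
    (N : Ω → ℕ) (Y V W : ℕ → Ω → ℝ)
    (hNmeas : Measurable N) (hYmeas : ∀ j, Measurable (Y j))
    (hVmeas : ∀ j, Measurable (V j)) (hWmeas : ∀ j, Measurable (W j))
    (hN : Measure.map N P = poissonMeasure (lam * L).toNNReal)
    (hY : ∀ j, Measure.map (Y j) P
        = (ENNReal.ofReal L)⁻¹ • (volume.restrict (Set.Icc (-(L / 2)) (L / 2))))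
    (hV : ∀ j, Measure.map (V j) P = expMeasure μ)
    (hW : ∀ j, Measure.map (W j) P = expMeasure μ)
    (hindep : iIndepFun (windowObstacleFun N Y V W) P)
    (xh₁ xh₂ : ℝ) (h12 : xh₁ < xh₂)
    (g : ℝ → ℝ)
    (hg1 : ∀ y, y ≤ xh₁ → g y = 1 - Real.exp (-(μ * (xh₁ - y))))
    (hg2 : ∀ y, xh₁ < y → y < xh₂ →
        g y = (1 - Real.exp (-(μ * (y - xh₁)))) * (1 - Real.exp (-(μ * (xh₂ - y)))))
    (hg3 : ∀ y, xh₂ ≤ y → g y = 1 - Real.exp (-(μ * (y - xh₂)))) :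
    P {ω | ∀ j < N ω,
          ¬ (Y j ω - V j ω ≤ xh₁ ∧ xh₁ ≤ Y j ω + W j ω)
          ∧ ¬ (Y j ω - V j ω ≤ xh₂ ∧ xh₂ ≤ Y j ω + W j ω)}
      = ENNReal.ofReal (Real.exp (-(lam * ∫ y in -(L / 2)..(L / 2), (1 - g y)))) := by
  classical
  have hab : -(L / 2) ≤ L / 2 := by linarith
  set A : ℕ → Set Ω := fun j => (fun ω => (Y j ω, V j ω, W j ω)) ⁻¹' covSet xh₁ xh₂ with hA
  have hAmeas : ∀ j, MeasurableSet (A j) := fun j =>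
    (covSet_meas xh₁ xh₂).preimage ((hYmeas j).prodMk ((hVmeas j).prodMk (hWmeas j)))
  -- bounds on g
  have hgle : ∀ y, 0 ≤ g y ∧ g y ≤ 1 := by
    intro y
    rcases le_or_gt y xh₁ with hy | hy
    · rw [hg1 y hy]
      have h1 : Real.exp (-(μ * (xh₁ - y))) ≤ 1 := Real.exp_le_one_iff.mpr (by nlinarith)
      have h2 : 0 < Real.exp (-(μ * (xh₁ - y))) := Real.exp_pos _
      constructor <;> linarith
    rcases lt_or_ge y xh₂ with hy2 | hy2
    · rw [hg2 y hy hy2]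
      have h1 : Real.exp (-(μ * (y - xh₁))) ≤ 1 := Real.exp_le_one_iff.mpr (by nlinarith)
      have h2 : 0 < Real.exp (-(μ * (y - xh₁))) := Real.exp_pos _
      have h3 : Real.exp (-(μ * (xh₂ - y))) ≤ 1 := Real.exp_le_one_iff.mpr (by nlinarith)
      have h4 : 0 < Real.exp (-(μ * (xh₂ - y))) := Real.exp_pos _
      constructor
      · exact mul_nonneg (by linarith) (by linarith)
      · nlinarith
    · rw [hg3 y hy2]
      have h1 : Real.exp (-(μ * (y - xh₂))) ≤ 1 := Real.exp_le_one_iff.mpr (by nlinarith)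
      have h2 : 0 < Real.exp (-(μ * (y - xh₂))) := Real.exp_pos _
      constructor <;> linarith
  have hgmeas : Measurable g := by
    have hgdef : g = fun y => if y ≤ xh₁ then 1 - Real.exp (-(μ * (xh₁ - y)))
        else if y < xh₂ then
          (1 - Real.exp (-(μ * (y - xh₁)))) * (1 - Real.exp (-(μ * (xh₂ - y))))
        else 1 - Real.exp (-(μ * (y - xh₂))) := by
      funext y
      rcases le_or_gt y xh₁ with hy | hy
      · rw [if_pos hy, hg1 y hy]
      rcases lt_or_ge y xh₂ with hy2 | hy2
      · rw [if_neg (not_le.2 hy), if_pos hy2, hg2 y hy hy2]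
      · rw [if_neg (not_le.2 hy), if_neg (not_lt.2 hy2), hg3 y hy2]
    rw [hgdef]
    refine Measurable.ite (measurableSet_le measurable_id measurable_const) (by fun_prop) ?_
    exact Measurable.ite (measurableSet_lt measurable_id measurable_const) (by fun_prop)
      (by fun_prop)
  have hgint : IntegrableOn g (Set.Icc (-(L / 2)) (L / 2)) volume := by
    refine Integrable.mono' (g := fun _ => (1 : ℝ)) ?_ hgmeas.aestronglyMeasurable
      (ae_of_all _ fun y => ?_)
    · exact integrableOn_const (by rw [Real.volume_Icc]; exact ENNReal.ofReal_ne_top)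
    · have h := hgle y
      rw [Real.norm_eq_abs, abs_le]
      constructor
      · show (-1 : ℝ) ≤ g y
        linarith [h.1]
      · show g y ≤ (1 : ℝ)
        exact h.2
  set I : ℝ := ∫ y in Set.Icc (-(L / 2)) (L / 2), g y with hI
  have hInn : 0 ≤ I := setIntegral_nonneg measurableSet_Icc (fun y _ => (hgle y).1)
  have hlint : (∫⁻ y in Set.Icc (-(L / 2)) (L / 2), ENNReal.ofReal (g y)) = ENNReal.ofReal I := by
    rw [hI, ofReal_integral_eq_lintegral_ofReal hgint (ae_of_all _ fun y => (hgle y).1)]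
  set q : ℝ := I / L with hq
  have hqnn : 0 ≤ q := div_nonneg hInn hL.le
  have hfmeas := windowObstacle_meas N Y V W hNmeas hYmeas hVmeas hWmeas
  -- probability of one obstacle avoiding both points
  have hPA : ∀ j, P (A j) = ENNReal.ofReal q := by
    intro j
    have hVW : IndepFun (V j) (W j) P :=
      hindep.indepFun (i := some (j, (1 : Fin 3))) (j := some (j, (2 : Fin 3))) (by simp)
    have hYVW : IndepFun (Y j) (fun ω => (V j ω, W j ω)) P := by
      have h := hindep.indepFun_prodMk hfmeas
        (some (j, (1 : Fin 3))) (some (j, (2 : Fin 3))) (some (j, (0 : Fin 3)))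
        (by simp) (by simp)
      exact h.symm
    have hop := obstacle_prob P hμ hL h12 (Y j) (V j) (W j) (hYmeas j) (hVmeas j) (hWmeas j)
      (hY j) (hV j) (hW j) hVW hYVW g hg1 hg2 hg3
    rw [hA]
    rw [hop, hlint, hq, ENNReal.ofReal_div_of_pos hL, ENNReal.div_eq_inv_mul]
  -- event decomposition
  have hEdecomp : {ω | ∀ j < N ω,
          ¬ (Y j ω - V j ω ≤ xh₁ ∧ xh₁ ≤ Y j ω + W j ω)
          ∧ ¬ (Y j ω - V j ω ≤ xh₂ ∧ xh₂ ≤ Y j ω + W j ω)}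
      = ⋃ n, ((N ⁻¹' {n}) ∩ ⋂ j ∈ Finset.range n, A j) := by
    ext ω
    simp only [Set.mem_setOf_eq, Set.mem_iUnion, Set.mem_inter_iff, Set.mem_preimage,
      Set.mem_singleton_iff, Set.mem_iInter, Finset.mem_range]
    constructor
    · intro h
      exact ⟨N ω, rfl, fun j hj => h j hj⟩
    · rintro ⟨n, rfl, h⟩ j hj
      exact h j hj
  have hdisj : Pairwise (Function.onFun Disjoint
      (fun n => (N ⁻¹' {n}) ∩ ⋂ j ∈ Finset.range n, A j)) := by
    intro i j hij
    refine Set.disjoint_left.2 ?_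
    rintro ω ⟨h1, -⟩ ⟨h2, -⟩
    exact hij ((Set.mem_singleton_iff.1 h1).symm.trans (Set.mem_singleton_iff.1 h2))
  have hmeasEach : ∀ n, MeasurableSet ((N ⁻¹' {n}) ∩ ⋂ j ∈ Finset.range n, A j) := fun n =>
    (hNmeas (measurableSet_singleton n)).inter
      (MeasurableSet.biInter (Finset.range n).countable_toSet (fun j _ => hAmeas j))
  rw [hEdecomp, measure_iUnion hdisj hmeasEach]
  have hfact := window_factorization P N Y V W hNmeas hYmeas hVmeas hWmeas hindep xh₁ xh₂
  have hNn : ∀ n : ℕ, P (N ⁻¹' {n})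
      = ENNReal.ofReal (Real.exp (-(lam * L)) * (lam * L) ^ n / n !) := by
    intro n
    rw [← Measure.map_apply hNmeas (measurableSet_singleton n), hN,
      poissonMeasure_singleton]
    rw [Real.coe_toNNReal _ (by positivity)]
  have hterm : ∀ n : ℕ, P ((N ⁻¹' {n}) ∩ ⋂ j ∈ Finset.range n, A j)
      = ENNReal.ofReal (Real.exp (-(lam * L)) * (lam * L) ^ n / n !)
        * (ENNReal.ofReal q) ^ n := by
    intro n
    rw [hfact n n, hNn n]
    congr 1
    rw [Finset.prod_congr rfl (fun j _ => hPA j), Finset.prod_const, Finset.card_range]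
  simp_rw [hterm]
  rw [poisson_generating (lam * L) q (by positivity) hqnn]
  have hintv : (∫ y in -(L / 2)..(L / 2), (1 - g y)) = L - I := by
    rw [intervalIntegral.integral_of_le hab,
      integral_sub (integrableOn_const (C := (1 : ℝ)) (by
        rw [Real.volume_Ioc]; exact ENNReal.ofReal_ne_top))
        (hgint.mono_set Set.Ioc_subset_Icc_self)]
    congr 1
    · rw [setIntegral_const, smul_eq_mul, mul_one,
        Real.volume_real_Ioc_of_le hab]
      ring
    · rw [hI, MeasureTheory.integral_Icc_eq_integral_Ioc]
  have hLne : L ≠ 0 := ne_of_gt hL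
  have harg : -(lam * L) + lam * L * q = -(lam * (L - I)) := by
    rw [hq]; field_simp; ring
  rw [hintv, harg]
end
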